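/- arXiv:1403.0738 — 3 statements merged into one kernel-verified Lean document; each statement's English description precedes it below -/
import Mathlib

section
/- Let q ∈ ℍ be nonzero with conj-logarithm candidate L := ln(‖q‖) + (V(q)/‖V(q)‖)·arccos(S(q)/‖q‖), where V(q) ≠ 0. Then exp(L) = q. -/
open Quaternion ComplexConjugate

noncomputable def toQ (z : ℂ) : ℍ[ℝ] := ⟨z.re, z.im, 0, 0⟩
def qi : ℍ[ℝ] := ⟨0, 1, 0, 0⟩
def qj : ℍ[ℝ] := ⟨0, 0, 1, 0⟩
def qk : ℍ[ℝ] := ⟨0, 0, 0, 1⟩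

theorem exp_log_quaternion (q : ℍ[ℝ]) (hq : q ≠ 0) (him : q.im ≠ 0) :
    NormedSpace.exp
      (((Real.log ‖q‖ : ℝ) : ℍ[ℝ]) +
        Real.arccos (q.re / ‖q‖) • (‖q.im‖⁻¹ • q.im)) = q := by
  have hn : (0:ℝ) < ‖q‖ := norm_pos_iff.mpr hq
  have hin : (0:ℝ) < ‖q.im‖ := norm_pos_iff.mpr him
  set n := ‖q‖ with hndef
  set m := ‖q.im‖ with hmdef
  -- n^2 = q.re^2 + m^2
  have hsq : n ^ 2 = q.re ^ 2 + m ^ 2 := by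
    have h1 : n ^ 2 = normSq q := by
      rw [sq, Quaternion.normSq_eq_norm_mul_self]
    have h2 : m ^ 2 = normSq q.im := by
      rw [sq, Quaternion.normSq_eq_norm_mul_self]
    rw [h1, h2, Quaternion.normSq_def', Quaternion.normSq_def']
    simp [Quaternion.im, QuaternionAlgebra.im]
    ring
  have hle1 : q.re / n ≤ 1 := by
    rw [div_le_one hn]; nlinarith [abs_nonneg q.re, le_abs_self q.re]
  have hlt1 : q.re / n < 1 := by
    rw [div_lt_one hn]; nlinarith [le_abs_self q.re]
  have hgem1 : -1 ≤ q.re / n := by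
    rw [le_div_iff₀ hn]; nlinarith [neg_abs_le q.re]
  set θ := Real.arccos (q.re / n) with hθdef
  have hθpos : 0 < θ := Real.arccos_pos.mpr hlt1
  have hcos : Real.cos θ = q.re / n := Real.cos_arccos hgem1 hle1
  have hsin : Real.sin θ = m / n := by
    rw [hθdef, Real.sin_arccos]
    rw [show (1 : ℝ) - (q.re / n) ^ 2 = (m / n) ^ 2 by
      field_simp; nlinarith]
    exact Real.sqrt_sq (by positivity)
  set L : ℍ[ℝ] := ((Real.log n : ℝ) : ℍ[ℝ]) + θ • (m⁻¹ • q.im) with hLdef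
  have hLre : L.re = Real.log n := by
    simp [hLdef]
  have hLim : L.im = θ • (m⁻¹ • q.im) := by
    ext <;> simp [hLdef]
  have hLimnorm : ‖L.im‖ = θ := by
    rw [hLim, norm_smul, norm_smul, Real.norm_eq_abs, Real.norm_eq_abs,
      abs_of_pos hθpos, abs_of_pos (inv_pos.mpr hin), ← hmdef,
      inv_mul_cancel₀ (ne_of_gt hin), mul_one]
  rw [Quaternion.exp_eq, hLre, hLimnorm, ← Real.exp_eq_exp_ℝ, Real.exp_log hn, hLim,
    hcos, hsin, smul_smul, smul_smul]
  rw [show m / n / θ * θ * m⁻¹ = n⁻¹ by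
    field_simp]
  rw [smul_add]
  rw [show n • ((q.re / n : ℝ) : ℍ[ℝ]) = ((q.re : ℝ) : ℍ[ℝ]) by
    rw [← Quaternion.coe_smul]; congr 1; rw [smul_eq_mul]; field_simp]
  rw [smul_smul, mul_inv_cancel₀ (ne_of_gt hn), one_smul, Quaternion.re_add_im]
end

section
/- If q = A·e^{Bj} with A = a + ib ∈ ℂ nonzero and B = c + id ∈ ℂ, and writing q = q_r + i q_i + j q_j + k q_k, then ‖q‖ = ‖A‖ and q_r + i·q_i = A·cos(‖B‖) (as complex numbers). -/
open Quaternion ComplexConjugate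

theorem polar_norm_and_first_pair (A : ℂ) (hA : A ≠ 0) (c d : ℝ) (q : ℍ[ℝ])
    (hq : q = toQ A * NormedSpace.exp (c • qj + d • qk)) :
    ‖q‖ = ‖A‖ ∧
    (⟨q.re, q.imI⟩ : ℂ) = A * Real.cos (Real.sqrt (c ^ 2 + d ^ 2)) := by
  set v : ℍ[ℝ] := c • qj + d • qk with hv
  have hvre : v.re = 0 := by simp [hv]; simp [qj, qk]
  have hvnorm : ‖v‖ = Real.sqrt (c ^ 2 + d ^ 2) := by
    rw [norm_eq_sqrt_real_inner, Quaternion.inner_self]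
    congr 1
    simp [hv, Quaternion.normSq_def']; simp [qj, qk]
  have hexp := Quaternion.exp_of_re_eq_zero v hvre
  rw [hvnorm] at hexp
  set r := Real.sqrt (c ^ 2 + d ^ 2)
  constructor
  · rw [hq, norm_mul, Quaternion.norm_exp, hvre]
    rw [norm_eq_sqrt_real_inner, Quaternion.inner_self, Quaternion.normSq_def']
    simp [toQ, norm_eq_sqrt_real_inner, Quaternion.inner_self,
      Quaternion.normSq_def', Complex.norm_def, Complex.normSq_apply, -inner_self_eq_norm_sq_to_K]
    ring_nf
  · rw [hq, hexp]
    apply Complex.ext <;>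
      simp [hv, Quaternion.re_mul, Quaternion.imI_mul, Quaternion.re_coe,
        Quaternion.re_add, Quaternion.imI_add, Quaternion.re_smul, Quaternion.imI_smul,
        Complex.cos_ofReal_re, Complex.cos_ofReal_im] <;> simp [toQ, qj, qk]
end

section
/- If e^{Bj} = α + jβ + kγ with B = c + id, 0 < ‖B‖ < π, and β² + γ² > 0, then B can be recovered as B = ((β + iγ)/‖β + iγ‖)·arccos(α), i.e., c = (β/√(β²+γ²))·arccos(α) and d = (γ/√(β²+γ²))·arccos(α). -/
open Quaternion ComplexConjugate

theorem phase_recovery (c d : ℝ)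
    (h0 : 0 < Real.sqrt (c ^ 2 + d ^ 2)) (hπ : Real.sqrt (c ^ 2 + d ^ 2) < Real.pi)
    (α β γ : ℝ)
    (hα : α = Real.cos (Real.sqrt (c ^ 2 + d ^ 2)))
    (hβ : β = (c / Real.sqrt (c ^ 2 + d ^ 2)) * Real.sin (Real.sqrt (c ^ 2 + d ^ 2)))
    (hγ : γ = (d / Real.sqrt (c ^ 2 + d ^ 2)) * Real.sin (Real.sqrt (c ^ 2 + d ^ 2)))
    (hβγ : 0 < β ^ 2 + γ ^ 2) :
    c = (β / Real.sqrt (β ^ 2 + γ ^ 2)) * Real.arccos α ∧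
    d = (γ / Real.sqrt (β ^ 2 + γ ^ 2)) * Real.arccos α := by
  set r := Real.sqrt (c ^ 2 + d ^ 2) with hr
  have hnn : (0:ℝ) ≤ c ^ 2 + d ^ 2 := by positivity
  have hr2 : r ^ 2 = c ^ 2 + d ^ 2 := Real.sq_sqrt hnn
  have hsin : 0 < Real.sin r := Real.sin_pos_of_pos_of_lt_pi h0 hπ
  have hrne : r ≠ 0 := ne_of_gt h0
  have hsum : β ^ 2 + γ ^ 2 = Real.sin r ^ 2 := by
    rw [hβ, hγ]
    field_simp
    ring_nf
    rw [hr2]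
  have hsqrt : Real.sqrt (β ^ 2 + γ ^ 2) = Real.sin r := by
    rw [hsum, Real.sqrt_sq hsin.le]
  have harc : Real.arccos α = r := by
    rw [hα, Real.arccos_cos h0.le hπ.le]
  rw [hsqrt, harc, hβ, hγ]
  constructor <;> field_simp <;> ring
end
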